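/- arXiv:1405.1237 — 7 statements merged into one kernel-verified Lean document; each statement's English description precedes it below -/
import Mathlib

section
/- Let G be a finite group acting on a finite set X. Then in the formal power series ring ℚ⟦t⟧ one has Σ_{n≥0} |Xⁿ/Gₙ|·tⁿ = (1 − t)^{−|X/G|}, where Xⁿ/Gₙ denotes the set of orbits of the wreath product Gₙ = G ≀ Sₙ acting on Xⁿ. -/
open scoped BigOperators

/-- The action of permutations of `Fin n` on `Fin n → G` by `(s • g) i = g (s⁻¹ i)`,
as a homomorphism to the automorphism group. -/
def permAut (G : Type*) [Group G] (n : ℕ) : Equiv.Perm (Fin n) →* MulAut (Fin n → G) where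
  toFun s :=
    { toFun := fun g => g ∘ s.symm
      invFun := fun g => g ∘ s
      left_inv := fun g => by funext i; simp
      right_inv := fun g => by funext i; simp
      map_mul' := fun g h => rfl }
  map_one' := by ext g i; simp; rfl
  map_mul' s t := by ext g i; simp [Equiv.Perm.mul_def]

/-- The wreath product `G ≀ Sₙ`, the semidirect product of `Gⁿ` by the symmetric
group `Sₙ` permuting the factors. -/
abbrev WreathProduct (G : Type*) [Group G] (n : ℕ) :=
  (Fin n → G) ⋊[permAut G n] Equiv.Perm (Fin n)

/-- The action of the wreath product `G ≀ Sₙ` on `Xⁿ`: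
`((g₁,…,gₙ),s)·(x₁,…,xₙ) = (g₁ x_{s⁻¹(1)},…,gₙ x_{s⁻¹(n)})`. -/
instance wreathMulAction (G : Type*) [Group G] (X : Type*) [MulAction G X] (n : ℕ) :
    MulAction (WreathProduct G n) (Fin n → X) where
  smul a x := fun i => a.left i • x (a.right.symm i)
  one_smul x := by
    funext i
    show (1 : WreathProduct G n).left i • x ((1 : WreathProduct G n).right.symm i) = x i
    simp
    rfl
  mul_smul a b x := by
    funext i
    show (a * b).left i • x ((a * b).right.symm i)
      = a.left i • (fun j => b.left j • x (b.right.symm j)) (a.right.symm i)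
    simp [SemidirectProduct.mul_left, SemidirectProduct.mul_right, permAut, mul_smul,
      Equiv.Perm.mul_def]

theorem wreath_smul_apply (G : Type*) [Group G] (X : Type*) [MulAction G X] (n : ℕ)
    (a : WreathProduct G n) (x : Fin n → X) (i : Fin n) :
    (a • x) i = a.left i • x (a.right.symm i) := rfl

open scoped Classical in
/-- The orbifold Euler characteristic of order `k` of a `G`-space `X`:
`χ⁽ᵏ⁾(X,G) = (1/|G|) Σ_{pairwise commuting (g₀,…,g_k)} |X^⟨g₀,…,g_k⟩|`. -/
noncomputable def orbChi (k : ℕ) (G : Type*) [Group G] (X : Type*) [MulAction G X] : ℚ :=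
  (∑ᶠ g : Fin (k + 1) → G,
      if ∀ i j, Commute (g i) (g j) then
        (Nat.card {x : X // ∀ i, g i • x = x} : ℚ)
      else 0) / (Nat.card G : ℚ)

/-- Generalized binomial coefficient `α choose j` for rational `α`. -/
noncomputable def qchoose (α : ℚ) (j : ℕ) : ℚ :=
  (∏ i ∈ Finset.range j, (α - i)) / (j.factorial : ℚ)

/-- The binomial series `(1 - t^m)^α ∈ ℚ⟦t⟧` for a rational exponent `α`:
its coefficient at `t^(m·j)` is `(-1)^j (α choose j)`. -/
noncomputable def onePowRat (m : ℕ) (α : ℚ) : PowerSeries ℚ :=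
  PowerSeries.mk fun n => if m ∣ n then (-1 : ℚ) ^ (n / m) * qchoose α (n / m) else 0


lemma exists_perm_of_ofFn_eq : ∀ {n : ℕ} {β : Type*} {f g : Fin n → β},
    ((List.ofFn f : Multiset β) = (List.ofFn g : Multiset β)) →
    ∃ σ : Equiv.Perm (Fin n), g = f ∘ σ := by
  intro n
  induction n with
  | zero => exact fun _ => ⟨1, funext fun i => i.elim0⟩
  | succ n ih =>
    intro β f g h
    have h0 : g 0 ∈ (List.ofFn f : Multiset β) := by
      rw [h]
      exact Multiset.mem_coe.mpr (by simp [List.mem_ofFn, Set.mem_range_self])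
    obtain ⟨j, hj⟩ : ∃ j, f j = g 0 :=
      (List.mem_ofFn (f := f) (a := g 0)).mp (Multiset.mem_coe.mp h0)
    have hswap : (List.ofFn (f ∘ Equiv.swap 0 j) : Multiset β) = (List.ofFn f : Multiset β) :=
      Quot.sound (Equiv.Perm.ofFn_comp_perm _ f)
    have hf : (List.ofFn (f ∘ Equiv.swap 0 j) : Multiset β)
        = (g 0) ::ₘ ((List.ofFn ((f ∘ Equiv.swap 0 j) ∘ Fin.succ)) : Multiset β) := by
      rw [List.ofFn_succ]
      simp only [Function.comp_apply, Equiv.swap_apply_left, hj, Multiset.cons_coe]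
      rfl
    have hg : (List.ofFn g : Multiset β)
        = (g 0) ::ₘ ((List.ofFn (g ∘ Fin.succ)) : Multiset β) := by
      rw [List.ofFn_succ]; rfl
    have htail : ((List.ofFn ((f ∘ Equiv.swap 0 j) ∘ Fin.succ)) : Multiset β)
        = ((List.ofFn (g ∘ Fin.succ)) : Multiset β) := by
      have h2 := hswap.trans (h.trans hg)
      rw [hf] at h2
      exact (Multiset.cons_inj_right _).mp h2
    obtain ⟨τ, hτ⟩ := ih htail
    refine ⟨Equiv.Perm.decomposeFin.symm (j, τ), funext fun i => ?_⟩
    refine Fin.cases ?_ (fun i => ?_) i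
    · simp [hj]
    · have := congrFun hτ i
      simp only [Function.comp_apply] at this ⊢
      rw [Equiv.Perm.decomposeFin_symm_apply_succ]
      exact this

lemma exists_ofFn_of_multiset_card {β : Type*} {n : ℕ} (s : Multiset β)
    (h : Multiset.card s = n) : ∃ f : Fin n → β, (List.ofFn f : Multiset β) = s := by
  induction s using Quotient.inductionOn with
  | h l =>
    simp only [Multiset.quot_mk_to_coe, Multiset.coe_card] at h
    subst h
    exact ⟨l.get, by rw [List.ofFn_get]; rfl⟩

open MulAction in
lemma wreath_orbit_card (G : Type*) [Group G] [Fintype G] (X : Type*) [Fintype X]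
    [MulAction G X] (n : ℕ) :
    Nat.card (Quotient (orbitRel (WreathProduct G n) (Fin n → X)))
      = (Nat.card (Quotient (orbitRel G X)) + n - 1).choose n := by
  classical
  letI sX : Setoid X := orbitRel G X
  letI : Fintype (Quotient sX) := Fintype.ofFinite _
  have hcard : ∀ x : Fin n → X,
      Multiset.card ((List.ofFn fun i => (⟦x i⟧ : Quotient sX)) : Multiset (Quotient sX)) = n := by
    intro x
    simp [Multiset.coe_card]
  have wd : ∀ x y : Fin n → X, (orbitRel (WreathProduct G n) (Fin n → X)) x y →
      ((List.ofFn fun i => (⟦x i⟧ : Quotient sX)) : Multiset (Quotient sX))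
        = ((List.ofFn fun i => (⟦y i⟧ : Quotient sX)) : Multiset (Quotient sX)) := by
    intro x y hxy
    obtain ⟨a, ha⟩ := orbitRel_apply.mp hxy
    have hfun : (fun i => (⟦x i⟧ : Quotient sX))
        = (fun i => (⟦y i⟧ : Quotient sX)) ∘ (a.right.symm : Equiv.Perm (Fin n)) := by
      funext i
      have hx : x i = a.left i • y (a.right.symm i) := by
        rw [← ha]; rfl
      rw [hx]
      exact Quotient.sound (orbitRel_apply.mpr ⟨a.left i, rfl⟩)
    rw [hfun]
    exact Quot.sound (Equiv.Perm.ofFn_comp_perm _ _)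
  let F : Quotient (orbitRel (WreathProduct G n) (Fin n → X)) → Sym (Quotient sX) n :=
    Quotient.lift (fun x => (⟨_, hcard x⟩ : Sym (Quotient sX) n))
      (fun x y hxy => Subtype.ext (wd x y hxy))
  have hbij : Function.Bijective F := by
    constructor
    · intro u v
      induction u using Quotient.inductionOn with
      | h x =>
      induction v using Quotient.inductionOn with
      | h y =>
      intro huv
      have hM : ((List.ofFn fun i => (⟦x i⟧ : Quotient sX)) : Multiset (Quotient sX))
          = ((List.ofFn fun i => (⟦y i⟧ : Quotient sX)) : Multiset (Quotient sX)) :=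
        congrArg Subtype.val huv
      obtain ⟨σ, hσ⟩ := exists_perm_of_ofFn_eq hM
      have hrel : ∀ i, ∃ g : G, g • x (σ i) = y i := by
        intro i
        exact MulAction.mem_orbit_iff.mp (orbitRel_apply.mp (Quotient.exact (congrFun hσ i)))
      choose g hg using hrel
      have : (⟨g, σ.symm⟩ : WreathProduct G n) • x = y := by
        funext i
        show g i • x (σ.symm.symm i) = y i
        rw [Equiv.symm_symm]
        exact hg i
      exact (Quotient.sound (orbitRel_apply.mpr ⟨_, this⟩)).symm
    · intro s
      obtain ⟨f, hf⟩ := exists_ofFn_of_multiset_card s.val s.prop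
      refine ⟨Quotient.mk _ (fun i => (f i).out), Subtype.ext ?_⟩
      show ((List.ofFn fun i => (⟦(f i).out⟧ : Quotient sX)) : Multiset (Quotient sX)) = s.val
      simp only [Quotient.out_eq]
      exact hf
  rw [Nat.card_eq_of_bijective F hbij, Nat.card_eq_fintype_card,
    Sym.card_sym_eq_choose, Nat.card_eq_fintype_card]

lemma inv_one_sub_pow_eq_mk_choose (k : ℕ) :
    (PowerSeries.mk fun n => ((k + n - 1).choose n : ℚ))
      = ((1 - PowerSeries.X (R := ℚ)) ^ k)⁻¹ := by
  have hc : PowerSeries.constantCoeff (R := ℚ) ((1 - PowerSeries.X) ^ k) ≠ 0 := by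
    simp [map_pow]
  rw [PowerSeries.eq_inv_iff_mul_eq_one hc]
  cases k with
  | zero =>
    rw [pow_zero, mul_one]
    ext m
    cases m with
    | zero => simp
    | succ m =>
      simp [PowerSeries.coeff_mk, PowerSeries.coeff_one,
        Nat.choose_eq_zero_of_lt (Nat.lt_succ_self m)]
  | succ d =>
    have h1 : (PowerSeries.mk fun n => ((d + 1 + n - 1).choose n : ℚ))
        = (PowerSeries.invOneSubPow ℚ (d + 1)).val := by
      rw [PowerSeries.invOneSubPow_val_succ_eq_mk_add_choose]
      ext m
      rw [PowerSeries.coeff_mk, PowerSeries.coeff_mk]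
      norm_cast
      rw [show d + 1 + m - 1 = d + m by omega, Nat.add_comm d m, Nat.choose_symm_add]
    rw [h1, ← PowerSeries.invOneSubPow_inv_eq_one_sub_pow]
    exact (PowerSeries.invOneSubPow ℚ (d + 1)).val_inv

/-- **Macdonald's formula for wreath product quotients.** For a finite group `G` acting on a
finite set `X`, one has in `ℚ⟦t⟧`: `Σ_{n≥0} |Xⁿ/Gₙ| tⁿ = (1 - t)^{-|X/G|}`. -/
theorem wreath_orbit_count_generating_series
    (G : Type*) [Group G] [Fintype G] (X : Type*) [Fintype X] [MulAction G X] :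
    (PowerSeries.mk fun n =>
        (Nat.card (Quotient (MulAction.orbitRel (WreathProduct G n) (Fin n → X))) : ℚ))
      = ((1 - PowerSeries.X (R := ℚ)) ^ Nat.card (Quotient (MulAction.orbitRel G X)))⁻¹ := by
  have h1 : (PowerSeries.mk fun n =>
      (Nat.card (Quotient (MulAction.orbitRel (WreathProduct G n) (Fin n → X))) : ℚ))
      = PowerSeries.mk fun n =>
        ((Nat.card (Quotient (MulAction.orbitRel G X)) + n - 1).choose n : ℚ) := by
    ext n
    rw [PowerSeries.coeff_mk, PowerSeries.coeff_mk, wreath_orbit_card]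
  rw [h1, inv_one_sub_pow_eq_mk_choose]
end

section
/- Let G' and G'' be finite groups acting on finite sets X' and X'' respectively, and let G'×G'' act on X'×X'' componentwise. Then for every k ≥ 0, χ^(k)(X'×X'', G'×G'') = χ^(k)(X',G') · χ^(k)(X'',G''). -/
open scoped BigOperators

/-- The componentwise action of `G' × G''` on `X' × X''`. -/
instance prodProdMulAction (G' G'' X' X'' : Type*) [Group G'] [Group G'']
    [MulAction G' X'] [MulAction G'' X''] : MulAction (G' × G'') (X' × X'') where
  smul p x := (p.1 • x.1, p.2 • x.2)
  one_smul x := by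
    show ((1 : G' × G'').1 • x.1, (1 : G' × G'').2 • x.2) = x
    simp
  mul_smul p q x := by
    show ((p * q).1 • x.1, (p * q).2 • x.2)
      = ((p.1 • q.1 • x.1, p.2 • q.2 • x.2) : X' × X'')
    simp [mul_smul]

/-- **Multiplicativity of the higher order orbifold Euler characteristic**: for finite groups
`G'`, `G''` acting on finite sets `X'`, `X''` and the componentwise action of `G' × G''` on
`X' × X''`, one has `χ⁽ᵏ⁾(X'×X'', G'×G'') = χ⁽ᵏ⁾(X',G') · χ⁽ᵏ⁾(X'',G'')` for every `k ≥ 0`. -/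
theorem orbChi_prod (G' G'' X' X'' : Type*) [Group G'] [Group G''] [Fintype G'] [Fintype G'']
    [Fintype X'] [Fintype X''] [MulAction G' X'] [MulAction G'' X''] (k : ℕ) :
    orbChi k (G' × G'') (X' × X'') = orbChi k G' X' * orbChi k G'' X'' := by
  classical
  unfold orbChi
  rw [finsum_eq_sum_of_fintype, finsum_eq_sum_of_fintype, finsum_eq_sum_of_fintype]
  rw [div_mul_div_comm]
  congr 1
  · -- numerators
    rw [Finset.sum_mul_sum, ← Fintype.sum_prod_type']
    refine Fintype.sum_equiv (Equiv.arrowProdEquivProdArrow (Fin (k + 1)) (fun _ => G') (fun _ => G'')) _ _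
      fun g => ?_
    simp only [Equiv.arrowProdEquivProdArrow, Equiv.coe_fn_mk]
    have hcomm : (∀ i j, Commute (g i) (g j)) ↔
        ((∀ i j, Commute ((g i).1) ((g j).1)) ∧ (∀ i j, Commute ((g i).2) ((g j).2))) := by
      simp only [Commute, SemiconjBy, Prod.ext_iff, Prod.fst_mul, Prod.snd_mul]
      exact ⟨fun h => ⟨fun i j => (h i j).1, fun i j => (h i j).2⟩,
        fun h i j => ⟨h.1 i j, h.2 i j⟩⟩
    by_cases h : ∀ i j, Commute (g i) (g j)
    · simp only [if_pos h, (hcomm.mp h).1, (hcomm.mp h).2, implies_true, if_true]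
      have e : {x : X' × X'' // ∀ i, g i • x = x} ≃
          {x : X' // ∀ i, (g i).1 • x = x} × {x : X'' // ∀ i, (g i).2 • x = x} :=
        { toFun := fun x => (⟨x.1.1, fun i => congrArg Prod.fst (x.2 i)⟩,
            ⟨x.1.2, fun i => congrArg Prod.snd (x.2 i)⟩)
          invFun := fun p => ⟨(p.1.1, p.2.1), fun i => Prod.ext (p.1.2 i) (p.2.2 i)⟩
          left_inv := fun x => rfl
          right_inv := fun p => rfl }
      rw [Nat.card_congr e, Nat.card_prod]
      push_cast
      ring
    · rw [if_neg h]
      rcases (not_and_or.mp (hcomm.not.mp h)) with h' | h'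
      · simp only [h', if_false, zero_mul]
      · simp only [h', if_false, mul_zero]
  · push_cast [Nat.card_eq_fintype_card, Fintype.card_prod]
    ring
end

section
/- Let Ĝ be a finite group acting on a finite set X, let G be a subgroup of Ĝ, and let a be an element of the centre of Ĝ such that Ĝ is generated by G together with a, the element a acts trivially on X, and for some r ≥ 1 one has aʳ ∈ G while aˢ ∉ G for all 0 < s < r (i.e. ⟨a⟩ ∩ G = ⟨aʳ⟩). Then for every k ≥ 0, χ^(k)(X, Ĝ) = r^k · χ^(k)(X, G), where X is regarded as a G-set by restriction of the action. -/
open scoped BigOperators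

/-- Let `Ĝ` be a finite group acting on a finite set `X`, `G ≤ Ĝ` a subgroup and `a` a central
element of `Ĝ` such that `Ĝ` is generated by `G` together with `a`, the element `a` acts
trivially on `X`, and for some `r ≥ 1` one has `aʳ ∈ G` while `aˢ ∉ G` for `0 < s < r`
(i.e. `⟨a⟩ ∩ G = ⟨aʳ⟩`). Then `χ⁽ᵏ⁾(X, Ĝ) = rᵏ · χ⁽ᵏ⁾(X, G)` for every `k ≥ 0`,
where `X` is a `G`-set by restriction. -/
theorem orbChi_extend_by_central
    (Ghat : Type*) [Group Ghat] [Fintype Ghat] (X : Type*) [Fintype X] [MulAction Ghat X]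
    (G : Subgroup Ghat) (a : Ghat)
    (hcenter : a ∈ Subgroup.center Ghat)
    (hgen : Subgroup.closure ((G : Set Ghat) ∪ {a}) = ⊤)
    (htriv : ∀ x : X, a • x = x)
    (r : ℕ) (hr : 1 ≤ r) (har : a ^ r ∈ G)
    (hs : ∀ s : ℕ, 0 < s → s < r → a ^ s ∉ G)
    (k : ℕ) :
    orbChi k Ghat X = (r : ℚ) ^ k * orbChi k G X := by
  classical
  haveI : Fintype G := Fintype.ofFinite G
  have hrpos : 0 < r := hr
  have hca : ∀ x : Ghat, Commute a x := fun x =>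
    ((Subgroup.mem_center_iff.mp hcenter x)).symm
  -- a^s acts trivially
  have htrivpow : ∀ (s : ℕ) (x : X), a ^ s • x = x := by
    intro s x
    induction s with
    | zero => simp
    | succ n ih => rw [pow_succ, mul_smul, htriv, ih]
  -- key multiplication formula
  have key : ∀ (u v : Ghat) (s s' : ℕ),
      (u * a ^ s) * (v * a ^ s') = (u * v) * a ^ (s + s') := by
    intro u v s s'
    have h1 : a ^ s * v = v * a ^ s := ((hca v).pow_left s).eq
    rw [mul_assoc u, ← mul_assoc (a ^ s) v, h1, mul_assoc v, ← pow_add, ← mul_assoc]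
  -- the bijection f : G × Fin r → Ghat
  set f : G × Fin r → Ghat := fun p => (p.1 : Ghat) * a ^ (p.2 : ℕ) with hf
  have hinj_aux : ∀ (g g' : G) (s s' : Fin r), (s : ℕ) ≤ (s' : ℕ) →
      (g : Ghat) * a ^ (s : ℕ) = (g' : Ghat) * a ^ (s' : ℕ) → g = g' ∧ s = s' := by
    intro g g' s s' hle heq
    have hd : (a : Ghat) ^ ((s' : ℕ) - s) = (g' : Ghat)⁻¹ * g := by
      have h2 : (a : Ghat) ^ (s' : ℕ) = a ^ ((s' : ℕ) - s) * a ^ (s : ℕ) := by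
        rw [← pow_add, Nat.sub_add_cancel hle]
      rw [h2, ← mul_assoc] at heq
      have h3 : (g : Ghat) = (g' : Ghat) * a ^ ((s' : ℕ) - s) :=
        mul_right_cancel heq
      rw [h3]; group
    have hmem : a ^ ((s' : ℕ) - s) ∈ G := by
      rw [hd]; exact G.mul_mem (G.inv_mem g'.2) g.2
    have hzero : (s' : ℕ) - s = 0 := by
      by_contra hne
      exact hs _ (Nat.pos_of_ne_zero hne) (lt_of_le_of_lt (Nat.sub_le _ _) s'.2) hmem
    have hss : s = s' := Fin.ext (le_antisymm hle (Nat.le_of_sub_eq_zero hzero))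
    refine ⟨?_, hss⟩
    apply Subtype.ext
    have : (g : Ghat) * a ^ (s : ℕ) = (g' : Ghat) * a ^ (s : ℕ) := by rw [heq, hss]
    exact mul_right_cancel this
  have hinj : Function.Injective f := by
    rintro ⟨g, s⟩ ⟨g', s'⟩ heq
    rcases le_total (s : ℕ) (s' : ℕ) with h | h
    · obtain ⟨h1, h2⟩ := hinj_aux g g' s s' h heq
      simp [h1, h2]
    · obtain ⟨h1, h2⟩ := hinj_aux g' g s' s h heq.symm
      simp [h1, h2]
  have hsur' : ∀ x : Ghat, ∃ g : G, ∃ z : ℤ, x = (g : Ghat) * a ^ z := by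
    intro x
    have hx : x ∈ Subgroup.closure ((G : Set Ghat) ∪ {a}) := by rw [hgen]; trivial
    refine Subgroup.closure_induction ?_ ?_ ?_ ?_ hx
    · rintro y (hy | hy)
      · exact ⟨⟨y, hy⟩, 0, by simp⟩
      · exact ⟨1, 1, by simp [Set.mem_singleton_iff.mp hy]⟩
    · exact ⟨1, 0, by simp⟩
    · rintro y z _ _ ⟨g, w, rfl⟩ ⟨g', w', rfl⟩
      refine ⟨g * g', w + w', ?_⟩
      have h1 : a ^ w * (g' : Ghat) = (g' : Ghat) * a ^ w := ((hca (g' : Ghat)).zpow_left w).eq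
      push_cast
      rw [mul_assoc (g : Ghat), ← mul_assoc (a ^ w), h1, mul_assoc (g' : Ghat),
        ← zpow_add, ← mul_assoc]
    · rintro y _ ⟨g, w, rfl⟩
      refine ⟨g⁻¹, -w, ?_⟩
      have h1 : a ^ (-w) * (g : Ghat)⁻¹ = (g : Ghat)⁻¹ * a ^ (-w) :=
        ((hca ((g : Ghat)⁻¹)).zpow_left (-w)).eq
      rw [mul_inv_rev, ← zpow_neg, h1]
      push_cast
      rfl
  have hsurf : Function.Surjective f := by
    intro x
    obtain ⟨g, z, rfl⟩ := hsur' x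
    have hr0 : (r : ℤ) ≠ 0 := by exact_mod_cast hrpos.ne'
    have hmod0 : 0 ≤ z % (r : ℤ) := Int.emod_nonneg z hr0
    have hmodlt : z % (r : ℤ) < r := Int.emod_lt_of_pos z (by exact_mod_cast hrpos)
    have htn : ((z % (r : ℤ)).toNat : ℤ) = z % (r : ℤ) := Int.toNat_of_nonneg hmod0
    refine ⟨(g * (⟨a ^ r, har⟩ : G) ^ (z / (r : ℤ)), ⟨(z % (r : ℤ)).toNat, ?_⟩), ?_⟩
    · omega
    · show ((g * (⟨a ^ r, har⟩ : G) ^ (z / (r : ℤ)) : G) : Ghat) * a ^ ((z % (r : ℤ)).toNat) =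
        (g : Ghat) * a ^ z
      have h1 : ((((⟨a ^ r, har⟩ : G) ^ (z / (r : ℤ))) : G) : Ghat) = (a ^ r) ^ (z / (r : ℤ)) := by
        push_cast
        rfl
      push_cast [h1]
      rw [mul_assoc, ← zpow_natCast a ((z % (r : ℤ)).toNat), htn, ← zpow_natCast a r,
        ← zpow_mul, ← zpow_add, Int.mul_ediv_add_emod]
  set e : G × Fin r ≃ Ghat := Equiv.ofBijective f ⟨hinj, hsurf⟩ with he
  -- cardinality
  have hcard : Nat.card Ghat = Nat.card G * r := by
    rw [← Nat.card_congr e, Nat.card_prod]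
    simp
  -- commuting criterion
  have hcomm2 : ∀ (g g' : G) (s s' : ℕ),
      Commute ((g : Ghat) * a ^ s) ((g' : Ghat) * a ^ s') ↔ Commute g g' := by
    intro g g' s s'
    rw [commute_iff_eq, key, key, Nat.add_comm s' s, commute_iff_eq]
    constructor
    · intro h
      have h2 : (g : Ghat) * g' = (g' : Ghat) * g := mul_right_cancel h
      apply Subtype.ext
      push_cast
      exact h2
    · intro h
      have h2 : (g : Ghat) * g' = (g' : Ghat) * g := by
        have := congrArg (Subtype.val) h
        push_cast at this
        exact this
      rw [h2]
  -- unfold orbChi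
  rw [orbChi, orbChi, finsum_eq_sum_of_fintype, finsum_eq_sum_of_fintype]
  set FG : (Fin (k + 1) → G) → ℚ := fun g =>
    if ∀ i j, Commute (g i) (g j) then (Nat.card {x : X // ∀ i, g i • x = x} : ℚ) else 0
    with hFG
  set FH : (Fin (k + 1) → Ghat) → ℚ := fun g =>
    if ∀ i j, Commute (g i) (g j) then (Nat.card {x : X // ∀ i, g i • x = x} : ℚ) else 0
    with hFH
  have E1 : ∀ p : Fin (k + 1) → G × Fin r,
      FH (fun i => f (p i)) = FG (fun i => (p i).1) := by
    intro p
    have hcm : (∀ i j, Commute (f (p i)) (f (p j))) ↔ ∀ i j, Commute ((p i).1) ((p j).1) := by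
      constructor
      · intro h i j; exact (hcomm2 _ _ _ _).mp (h i j)
      · intro h i j; exact (hcomm2 _ _ _ _).mpr (h i j)
    have hcd : Nat.card {x : X // ∀ i, f (p i) • x = x}
        = Nat.card {x : X // ∀ i, (p i).1 • x = x} := by
      apply Nat.card_congr
      apply Equiv.subtypeEquivRight
      intro x
      have : ∀ i, f (p i) • x = ((p i).1 : Ghat) • x := by
        intro i
        show (((p i).1 : Ghat) * a ^ ((p i).2 : ℕ)) • x = _
        rw [mul_smul, htrivpow]
      constructor
      · intro h i; rw [Subgroup.smul_def, ← this i]; exact h i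
      · intro h i; rw [this i, ← Subgroup.smul_def]; exact h i
    rw [hFH, hFG]
    simp only [hcd]
    exact if_congr hcm rfl rfl
  have hsum : ∑ g : Fin (k + 1) → Ghat, FH g
      = (r : ℚ) ^ (k + 1) * ∑ g : Fin (k + 1) → G, FG g := by
    set E : (Fin (k + 1) → G × Fin r) ≃ (Fin (k + 1) → Ghat) :=
      Equiv.arrowCongr (Equiv.refl _) e with hE
    rw [← Equiv.sum_comp E FH]
    have hEp : ∀ p, FH (E p) = FG (fun i => (p i).1) := by
      intro p
      have : E p = fun i => f (p i) := by
        funext i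
        simp [hE, he, Equiv.arrowCongr]
        rfl
      rw [this, E1]
    simp only [hEp]
    set P : (Fin (k + 1) → G × Fin r) ≃ ((Fin (k + 1) → G) × (Fin (k + 1) → Fin r)) :=
      Equiv.arrowProdEquivProdArrow (Fin (k + 1)) (fun _ => G) (fun _ => Fin r) with hP
    have h4 : ∑ p : Fin (k + 1) → G × Fin r, FG (fun i => (p i).1)
        = ∑ q : (Fin (k + 1) → G) × (Fin (k + 1) → Fin r), FG q.1 :=
      Equiv.sum_comp P (fun q => FG q.1)
    rw [h4, Fintype.sum_prod_type]
    simp only [Finset.sum_const, Finset.card_univ, nsmul_eq_mul, Fintype.card_fun,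
      Fintype.card_fin]
    rw [← Finset.mul_sum]
    push_cast
    ring
  rw [hsum, hcard]
  have hG0 : (Nat.card G : ℚ) ≠ 0 := by
    have : 0 < Nat.card G := Nat.card_pos
    exact_mod_cast this.ne'
  have hr0 : (r : ℚ) ≠ 0 := by exact_mod_cast hrpos.ne'
  push_cast
  field_simp
  ring
end

section
/- Let G be a finite group acting on a finite set X. For a subgroup H ≤ G let X^([H]) denote the set of points x ∈ X whose stabilizer subgroup is conjugate to H; this set is G-invariant. Then for every k ≥ 0, χ^(k)(X,G) = Σ_{[H]} |X^([H])/G| · χ^(k)(G/H, G), where the sum is over the conjugacy classes [H] of subgroups of G, and G acts on the coset space G/H by left translation. -/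
open scoped BigOperators

/-- The conjugate subgroup `g H g⁻¹`. -/
def conjSub {G : Type*} [Group G] (g : G) (H : Subgroup G) : Subgroup G :=
  H.map (MulAut.conj g).toMonoidHom

section Aux

variable {G : Type*} [Group G]

lemma mem_conjSub {g x : G} {H : Subgroup G} :
    x ∈ conjSub g H ↔ g⁻¹ * x * g ∈ H := by
  simp only [conjSub, Subgroup.mem_map, MulEquiv.coe_toMonoidHom, MulAut.conj_apply]
  constructor
  · rintro ⟨y, hy, rfl⟩
    simpa [mul_assoc] using hy
  · intro h
    exact ⟨g⁻¹ * x * g, h, by group⟩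

lemma conjSub_one (H : Subgroup G) : conjSub 1 H = H := by
  ext x; simp [mem_conjSub]

lemma conjSub_conjSub (g h : G) (H : Subgroup G) :
    conjSub g (conjSub h H) = conjSub (g * h) H := by
  ext x; simp [mem_conjSub, mul_assoc]

lemma conjR_equivalence :
    Equivalence (fun H K : Subgroup G => ∃ g : G, conjSub g H = K) := by
  constructor
  · exact fun H => ⟨1, conjSub_one H⟩
  · rintro H K ⟨g, rfl⟩
    exact ⟨g⁻¹, by rw [conjSub_conjSub, inv_mul_cancel, conjSub_one]⟩
  · rintro H K L ⟨g, rfl⟩ ⟨h, rfl⟩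
    exact ⟨h * g, by rw [conjSub_conjSub]⟩

lemma conjR_quot_mk_eq {H K : Subgroup G} :
    Quot.mk (fun H K : Subgroup G => ∃ g : G, conjSub g H = K) H =
      Quot.mk (fun H K : Subgroup G => ∃ g : G, conjSub g H = K) K ↔
    ∃ g : G, conjSub g H = K := by
  constructor
  · intro h
    exact (conjR_equivalence.eqvGen_iff).mp (Quot.eqvGen_exact h)
  · exact fun h => Quot.sound h

/-- `orbChi` is invariant under equivariant bijections. -/
lemma orbChi_congr (k : ℕ) {X Y : Type*} [MulAction G X] [MulAction G Y]
    (e : X ≃ Y) (he : ∀ (g : G) (x : X), e (g • x) = g • e x) :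
    orbChi k G X = orbChi k G Y := by
  unfold orbChi
  congr 1
  apply finsum_congr
  intro g
  by_cases hc : ∀ i j, Commute (g i) (g j)
  · simp only [if_pos hc]
    congr 1
    apply Nat.card_congr
    refine Equiv.subtypeEquiv e fun x => ?_
    constructor
    · intro h i
      rw [← he, h]
    · intro h i
      apply e.injective
      rw [he, h]
  · simp only [if_neg hc]

/-- An equivariant bijection `G ⧸ gHg⁻¹ ≃ G ⧸ H`. -/
noncomputable def quotConjEquiv (g : G) (H : Subgroup G) :
    (G ⧸ conjSub g H) ≃ (G ⧸ H) :=
  Quotient.congr (Equiv.mulRight g) (by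
    intro a b
    rw [QuotientGroup.leftRel_apply, QuotientGroup.leftRel_apply]
    simp only [Equiv.coe_mulRight]
    rw [mem_conjSub]
    constructor
    · intro h; convert h using 1; group
    · intro h; convert h using 1; group)

lemma quotConjEquiv_mk (g : G) (H : Subgroup G) (a : G) :
    quotConjEquiv g H (QuotientGroup.mk a) = QuotientGroup.mk (a * g) := rfl

lemma orbChi_conj (k : ℕ) (g : G) (H : Subgroup G) :
    orbChi k G (G ⧸ conjSub g H) = orbChi k G (G ⧸ H) := by
  refine orbChi_congr k (quotConjEquiv g H) ?_
  intro c x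
  induction x using QuotientGroup.induction_on with
  | H a =>
    have h1 : c • (QuotientGroup.mk a : G ⧸ conjSub g H) = QuotientGroup.mk (c * a) := rfl
    have h2 : c • (QuotientGroup.mk (a * g) : G ⧸ H) = QuotientGroup.mk (c * (a * g)) := rfl
    rw [h1, quotConjEquiv_mk, quotConjEquiv_mk, h2, mul_assoc]

/-- Counting a subtype by fibers of a map. -/
lemma nat_card_fiber_sum {X I : Type*} [Fintype X] [Fintype I] (f : X → I) (P : X → Prop) :
    Nat.card {x : X // P x} = ∑ i : I, Nat.card {x : X // f x = i ∧ P x} := by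
  classical
  have e : {x : X // P x} ≃ Σ i : I, {x : X // f x = i ∧ P x} :=
    (Equiv.sigmaFiberEquiv (fun y : {x // P x} => f y.1)).symm.trans
      (Equiv.sigmaCongrRight fun i =>
        (Equiv.subtypeSubtypeEquivSubtypeInter P (fun x => f x = i)).trans
          (Equiv.subtypeEquivRight fun x => and_comm))
  rw [Nat.card_congr e, Nat.card_eq_fintype_card, Fintype.card_sigma]
  exact Finset.sum_congr rfl fun i _ => (Nat.card_eq_fintype_card).symm

end Aux

/-- **Decomposition of the orbifold Euler characteristic by orbit types.** For a finite group
`G` acting on a finite set `X` and any `k ≥ 0`,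
`χ⁽ᵏ⁾(X,G) = Σ_{[H]} |X^([H])/G| · χ⁽ᵏ⁾(G/H, G)`, where the sum runs over the conjugacy
classes `[H]` of subgroups of `G` (formalized as the quotient of `Subgroup G` by the
conjugation relation, with `Quot.out` picking a representative of each class),
`X^([H])` is the (G-invariant) set of points whose stabilizer is conjugate to `H`,
`X^([H])/G` is its image in the orbit space `X/G`, and `G` acts on `G ⧸ H` by left
translation. -/
theorem orbChi_orbit_type_decomposition
    (G : Type*) [Group G] [Fintype G] (X : Type*) [Fintype X] [MulAction G X] (k : ℕ) :
    orbChi k G X =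
      ∑ᶠ q : Quot (fun H K : Subgroup G => ∃ g : G, conjSub g H = K),
        (Nat.card ↥(Quotient.mk (MulAction.orbitRel G X) ''
            {x : X | ∃ g : G, MulAction.stabilizer G x = conjSub g q.out}) : ℚ)
          * orbChi k G (G ⧸ q.out) := by
  classical
  set R := fun H K : Subgroup G => ∃ g : G, conjSub g H = K with hR
  letI : Fintype (Quotient (MulAction.orbitRel G X)) := Fintype.ofFinite _
  letI : Fintype (Quot R) := Fintype.ofFinite _
  set Ω := Quotient (MulAction.orbitRel G X)
  -- the orbit-type map
  set F : Ω → Quot R := fun ω => Quot.mk R (MulAction.stabilizer G ω.out) with hF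
  -- membership in an orbit characterizes the class
  have mk_eq_iff : ∀ (x : X) (ω : Ω),
      Quotient.mk (MulAction.orbitRel G X) x = ω ↔ x ∈ MulAction.orbit G ω.out := by
    intro x ω
    constructor
    · intro h
      have := Quotient.exact (h.trans ω.out_eq.symm)
      exact (MulAction.orbitRel_apply).mp this
    · intro h
      refine (Quotient.sound ((MulAction.orbitRel_apply).mpr h)).trans ω.out_eq
  -- Step 1 : fixed-point count decomposes over orbits
  have key : ∀ gt : Fin (k + 1) → G,
      (Nat.card {x : X // ∀ i, gt i • x = x} : ℚ)
        = ∑ ω : Ω, (Nat.card {y : G ⧸ MulAction.stabilizer G ω.out // ∀ i, gt i • y = y} : ℚ) := by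
    intro gt
    have h1 := nat_card_fiber_sum (fun x : X => Quotient.mk (MulAction.orbitRel G X) x)
      (fun x => ∀ i, gt i • x = x)
    rw [h1]
    push_cast
    refine Finset.sum_congr rfl fun ω _ => ?_
    congr 1
    apply Nat.card_congr
    refine Equiv.symm (Equiv.ofBijective
      (fun y => ⟨MulAction.ofQuotientStabilizer G ω.out y.1, ?_, ?_⟩) ⟨?_, ?_⟩)
    · exact (mk_eq_iff _ ω).mpr (MulAction.ofQuotientStabilizer_mem_orbit G ω.out y.1)
    · intro i
      rw [← MulAction.ofQuotientStabilizer_smul, y.2 i]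
    · intro y z h
      exact Subtype.ext (MulAction.injective_ofQuotientStabilizer G ω.out
        (congrArg Subtype.val h))
    · rintro ⟨x, hx, hfix⟩
      obtain ⟨c, hc⟩ := (mk_eq_iff x ω).mp hx
      refine ⟨⟨QuotientGroup.mk c, ?_⟩, ?_⟩
      · intro i
        apply MulAction.injective_ofQuotientStabilizer G ω.out
        simp only [MulAction.ofQuotientStabilizer_smul, MulAction.ofQuotientStabilizer_mk]
        show gt i • (c • ω.out) = c • ω.out
        rw [show c • ω.out = x from hc]
        exact hfix i
      · exact Subtype.ext hc
  have step1 : orbChi k G X = ∑ ω : Ω, orbChi k G (G ⧸ MulAction.stabilizer G ω.out) := by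
    unfold orbChi
    simp only [finsum_eq_sum_of_fintype]
    rw [← Finset.sum_div]
    congr 1
    rw [Finset.sum_comm]
    refine Finset.sum_congr rfl fun g _ => ?_
    by_cases hc : ∀ i j, Commute (g i) (g j)
    · simp only [if_pos hc]
      exact key g
    · simp only [if_neg hc, Finset.sum_const_zero]
  -- Step 2 : each orbit contributes the orbChi of its class representative
  have step2 : ∀ ω : Ω,
      orbChi k G (G ⧸ MulAction.stabilizer G ω.out) = orbChi k G (G ⧸ (F ω).out) := by
    intro ω
    have h : Quot.mk R ((F ω).out) = Quot.mk R (MulAction.stabilizer G ω.out) :=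
      (F ω).out_eq
    obtain ⟨g, hg⟩ := conjR_quot_mk_eq.mp h
    rw [← hg, orbChi_conj]
  -- Step 3 : the fibers of `F` match the sets in the statement
  have hset : ∀ q : Quot R,
      (Quotient.mk (MulAction.orbitRel G X) ''
          {x : X | ∃ g : G, MulAction.stabilizer G x = conjSub g q.out})
        = {ω : Ω | F ω = q} := by
    intro q
    ext ω
    simp only [Set.mem_image, Set.mem_setOf_eq]
    constructor
    · rintro ⟨x, ⟨g, hg⟩, hx⟩
      have horb : ω.out ∈ MulAction.orbit G x := by
        have h1 : Quotient.mk (MulAction.orbitRel G X) ω.out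
            = Quotient.mk (MulAction.orbitRel G X) x := ω.out_eq.trans hx.symm
        exact (MulAction.orbitRel_apply).mp (Quotient.exact h1)
      obtain ⟨c', hc'⟩ := horb
      have hstab : MulAction.stabilizer G ω.out = conjSub (c' * g) q.out := by
        rw [← hc', MulAction.stabilizer_smul_eq_stabilizer_map_conj]
        show conjSub c' (MulAction.stabilizer G x) = _
        rw [hg, conjSub_conjSub]
      show Quot.mk R (MulAction.stabilizer G ω.out) = q
      rw [hstab]
      have h2 : Quot.mk R q.out = Quot.mk R (conjSub (c' * g) q.out) :=
        Quot.sound ⟨c' * g, rfl⟩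
      exact h2.symm.trans q.out_eq
    · intro h
      have h' : Quot.mk R (MulAction.stabilizer G ω.out) = Quot.mk R q.out := by
        rw [show Quot.mk R q.out = q from q.out_eq]; exact h
      obtain ⟨g, hg⟩ := conjR_quot_mk_eq.mp h'
      refine ⟨ω.out, ⟨g⁻¹, ?_⟩, ω.out_eq⟩
      rw [← hg, conjSub_conjSub, inv_mul_cancel, conjSub_one]
  have hcard : ∀ q : Quot R,
      (Nat.card ↥(Quotient.mk (MulAction.orbitRel G X) ''
          {x : X | ∃ g : G, MulAction.stabilizer G x = conjSub g q.out}) : ℚ)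
        = ((Finset.univ.filter fun ω : Ω => F ω = q).card : ℚ) := by
    intro q
    rw [hset q]
    congr 1
    rw [show {ω : Ω | F ω = q} = (fun ω : Ω => F ω = q) from rfl]
    rw [Nat.card_eq_fintype_card]
    exact Fintype.card_subtype _
  -- put everything together
  rw [step1, finsum_eq_sum_of_fintype]
  calc ∑ ω : Ω, orbChi k G (G ⧸ MulAction.stabilizer G ω.out)
      = ∑ ω : Ω, orbChi k G (G ⧸ (F ω).out) := Finset.sum_congr rfl fun ω _ => step2 ω
    _ = ∑ q : Quot R, ∑ ω ∈ Finset.univ.filter (fun ω : Ω => F ω = q),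
          orbChi k G (G ⧸ (F ω).out) := by
        rw [Finset.sum_fiberwise_eq_sum_filter Finset.univ Finset.univ F
          (fun ω => orbChi k G (G ⧸ (F ω).out))]
        simp
    _ = ∑ q : Quot R,
          ((Finset.univ.filter fun ω : Ω => F ω = q).card : ℚ) * orbChi k G (G ⧸ q.out) := by
        refine Finset.sum_congr rfl fun q _ => ?_
        rw [Finset.sum_congr rfl (fun ω hω => by
          rw [(Finset.mem_filter.mp hω).2])]
        rw [Finset.sum_const, nsmul_eq_mul]
    _ = ∑ q : Quot R,
          (Nat.card ↥(Quotient.mk (MulAction.orbitRel G X) ''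
              {x : X | ∃ g : G, MulAction.stabilizer G x = conjSub g q.out}) : ℚ)
            * orbChi k G (G ⧸ q.out) := by
        refine Finset.sum_congr rfl fun q _ => ?_
        rw [hcard q]
end

section
/- Let G be a finite group acting on a finite set X. Then (1/|G|)·Σ_{(g₀,g₁) ∈ G×G, g₀g₁ = g₁g₀} |X^⟨g₀,g₁⟩| = Σ_{[g]} |X^⟨g⟩ / C_G(g)|, where the sum on the right is over the conjugacy classes [g] of elements of G, C_G(g) = {h ∈ G : h⁻¹gh = g} is the centralizer of g, and X^⟨g⟩/C_G(g) is the set of orbits of the centralizer C_G(g) acting on the fixed point set X^⟨g⟩ (the right-hand side is independent of the chosen representatives g). -/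
open scoped BigOperators

/-- The centralizer `C_G(g)` acts on the fixed point set `X^⟨g⟩ = {x ∈ X : g x = x}`. -/
instance centralizerFixedAction (G : Type*) [Group G] (X : Type*) [MulAction G X] (g : G) :
    MulAction ↥(Subgroup.centralizer {g}) {x : X // g • x = x} where
  smul h x := ⟨(h : G) • (x : X), by
    have hc : g * (h : G) = (h : G) * g := h.2 g (Set.mem_singleton g)
    rw [← mul_smul, hc, mul_smul, x.2]⟩
  one_smul x := by
    apply Subtype.ext
    show ((1 : Subgroup.centralizer {g}) : G) • (x : X) = (x : X)
    simp
  mul_smul h h' x := by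
    apply Subtype.ext
    show ((h * h' : Subgroup.centralizer {g}) : G) • (x : X)
      = (h : G) • ((h' : G) • (x : X))
    simp [mul_smul]

section Aux

variable {G : Type*} [Group G] {X : Type*} [MulAction G X]

lemma isConj_equivalence : Equivalence (IsConj (α := G)) :=
  ⟨IsConj.refl, IsConj.symm, IsConj.trans⟩

/-- equivalence between pair-fixed points, used for Burnside. -/
def pairFixEquivFixedBy (g : G) (h : ↥(Subgroup.centralizer {g})) :
    {x : X // g • x = x ∧ (h : G) • x = x} ≃
      MulAction.fixedBy {x : X // g • x = x} h where
  toFun x := ⟨⟨x.1, x.2.1⟩, Subtype.ext x.2.2⟩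
  invFun y := ⟨y.1.1, y.1.2, congrArg Subtype.val y.2⟩
  left_inv _ := rfl
  right_inv _ := rfl

/-- Conjugation equivalence on pair-fixed points. -/
def conjPairFixEquiv (g g₁ k : G) :
    {x : X // g • x = x ∧ g₁ • x = x} ≃
      {x : X // (k * g * k⁻¹) • x = x ∧ (k * g₁ * k⁻¹) • x = x} where
  toFun x := ⟨k • (x : X), by
    have h1 := x.2.1
    have h2 := x.2.2
    refine ⟨?_, ?_⟩ <;> simp only [mul_smul, inv_smul_smul]
    · rw [h1]
    · rw [h2]⟩
  invFun y := ⟨k⁻¹ • (y : X), by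
    have h1 := y.2.1
    have h2 := y.2.2
    constructor
    · have := congrArg (fun z => k⁻¹ • z) h1
      simpa [mul_smul] using this
    · have := congrArg (fun z => k⁻¹ • z) h2
      simpa [mul_smul] using this⟩
  left_inv x := Subtype.ext (inv_smul_smul k (x : X))
  right_inv y := Subtype.ext (smul_inv_smul k (y : X))

end Aux

open scoped Classical in
/-- For a finite group `G` acting on a finite set `X`:
`(1/|G|) Σ_{(g₀,g₁) commuting} |X^⟨g₀,g₁⟩| = Σ_{[g]} |X^⟨g⟩ / C_G(g)|`, where the sum on the
right runs over the conjugacy classes of elements of `G` (formalized as the quotient of `G` by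
the conjugation relation `IsConj`, with `Quot.out` picking a representative — the summand does
not depend on this choice), and `X^⟨g⟩/C_G(g)` is the orbit space of the centralizer `C_G(g)`
acting on the fixed point set `X^⟨g⟩`. -/
theorem orbifold_euler_char_eq_sum_over_conj_classes
    (G : Type*) [Group G] [Fintype G] (X : Type*) [Fintype X] [MulAction G X] :
    (∑ᶠ p : G × G,
        if p.1 * p.2 = p.2 * p.1 then
          (Nat.card {x : X // p.1 • x = x ∧ p.2 • x = x} : ℚ)
        else 0) / (Nat.card G : ℚ)
      = ∑ᶠ q : Quot (IsConj (α := G)),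
          (Nat.card (Quotient (MulAction.orbitRel ↥(Subgroup.centralizer {q.out})
              {x : X // q.out • x = x})) : ℚ) := by
  classical
  haveI : Fintype (Quot (IsConj (α := G))) := Fintype.ofFinite _
  set S : G → ℚ := fun g => ∑ g₁ : G,
    if g * g₁ = g₁ * g then (Nat.card {x : X // g • x = x ∧ g₁ • x = x} : ℚ) else 0 with hS
  set N : G → ℚ := fun g => (Nat.card (Quotient (MulAction.orbitRel
      ↥(Subgroup.centralizer {g}) {x : X // g • x = x})) : ℚ) with hN
  -- Step 1: LHS numerator = ∑ g, S g
  have h1 : (∑ᶠ p : G × G,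
        if p.1 * p.2 = p.2 * p.1 then
          (Nat.card {x : X // p.1 • x = x ∧ p.2 • x = x} : ℚ)
        else 0) = ∑ g : G, S g := by
    rw [finsum_eq_sum_of_fintype, Fintype.sum_prod_type]
  -- Step 2: Burnside: S g = N g * |C(g)|
  have h2 : ∀ g : G, S g = N g * (Nat.card ↥(Subgroup.centralizer {g}) : ℚ) := by
    intro g
    haveI : ∀ a : ↥(Subgroup.centralizer {g}),
        Fintype (MulAction.fixedBy {x : X // g • x = x} a) := fun a => Fintype.ofFinite _
    haveI : Fintype (Quotient (MulAction.orbitRel ↥(Subgroup.centralizer {g})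
        {x : X // g • x = x})) := Fintype.ofFinite _
    have key := MulAction.sum_card_fixedBy_eq_card_orbits_mul_card_group
      ↥(Subgroup.centralizer {g}) {x : X // g • x = x}
    have hsum : S g = ∑ h : ↥(Subgroup.centralizer {g}),
        (Nat.card {x : X // g • x = x ∧ (h : G) • x = x} : ℚ) := by
      rw [hS]
      simp only [← Finset.sum_filter]
      rw [Finset.sum_subtype (p := fun g₁ => g₁ ∈ Subgroup.centralizer {g})
        (Finset.univ.filter fun g₁ => g * g₁ = g₁ * g)
        (fun x => by simp [Subgroup.mem_centralizer_singleton_iff, eq_comm])]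
    rw [hsum]
    have : ∀ h : ↥(Subgroup.centralizer {g}),
        Nat.card {x : X // g • x = x ∧ (h : G) • x = x}
          = Fintype.card (MulAction.fixedBy {x : X // g • x = x} h) := fun h => by
      rw [Nat.card_congr (pairFixEquivFixedBy g h), Nat.card_eq_fintype_card]
    simp_rw [this]
    rw [← Nat.cast_sum, key, hN]
    simp [Nat.card_eq_fintype_card]
  -- Step 3: S is conjugation invariant
  have h3 : ∀ g k : G, S (k * g * k⁻¹) = S g := by
    intro g k
    rw [hS]
    simp only
    refine (Fintype.sum_equiv (MulAut.conj k).toEquiv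
      (fun g₁ => if g * g₁ = g₁ * g then
        (Nat.card {x : X // g • x = x ∧ g₁ • x = x} : ℚ) else 0)
      (fun g₁ => if (k * g * k⁻¹) * g₁ = g₁ * (k * g * k⁻¹) then
        (Nat.card {x : X // (k * g * k⁻¹) • x = x ∧ g₁ • x = x} : ℚ) else 0)
      ?_).symm
    intro g₁
    show (if g * g₁ = g₁ * g then
      (Nat.card {x : X // g • x = x ∧ g₁ • x = x} : ℚ) else 0) = if (k * g * k⁻¹) * (k * g₁ * k⁻¹) = (k * g₁ * k⁻¹) * (k * g * k⁻¹) then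
      (Nat.card {x : X // (k * g * k⁻¹) • x = x ∧ (k * g₁ * k⁻¹) • x = x} : ℚ) else 0
    have hconj : ∀ a b : G, k * (a * b) * k⁻¹ = (k * a * k⁻¹) * (k * b * k⁻¹) := by
      intro a b; simp [mul_assoc]
    have hcond : (k * g * k⁻¹) * (k * g₁ * k⁻¹) = (k * g₁ * k⁻¹) * (k * g * k⁻¹)
        ↔ g * g₁ = g₁ * g := by
      constructor
      · intro h
        have := congrArg (fun z => k⁻¹ * z * k) h
        simpa [mul_assoc] using this
      · intro h
        rw [← hconj, ← hconj, h]
    have hcard : Nat.card {x : X // g • x = x ∧ g₁ • x = x}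
        = Nat.card {x : X // (k * g * k⁻¹) • x = x ∧ (k * g₁ * k⁻¹) • x = x} :=
      Nat.card_congr (conjPairFixEquiv g g₁ k)
    by_cases h : g * g₁ = g₁ * g
    · rw [if_pos h, if_pos (hcond.mpr h), hcard]
    · rw [if_neg h, if_neg (fun hc => h (hcond.mp hc))]
  -- Step 4: class equation: |class of g| * |C(g)| = |G|
  have h4 : ∀ g : G, Fintype.card {a : G // IsConj g a} *
      Nat.card ↥(Subgroup.centralizer {g}) = Fintype.card G := by
    intro g
    rw [Subgroup.nat_card_centralizer_nat_card_stabilizer, Nat.card_eq_fintype_card]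
    have key := MulAction.card_orbit_mul_card_stabilizer_eq_card_group (ConjAct G) g
    have hGG : Fintype.card (ConjAct G) = Fintype.card G :=
      Fintype.card_congr ConjAct.ofConjAct.toEquiv
    rw [← hGG, ← key]
    congr 1
    exact Fintype.card_congr (Equiv.subtypeEquivRight fun a => by
      rw [ConjAct.mem_orbit_conjAct, isConj_comm])
  -- Step 5: Quot.mk fibers are conjugacy classes
  have h5 : ∀ (q : Quot (IsConj (α := G))) (g : G),
      Quot.mk IsConj g = q ↔ IsConj q.out g := by
    intro q g
    conv_lhs => rw [← Quot.out_eq q]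
    rw [eq_comm, Quot.eq, isConj_equivalence.eqvGen_iff]
  -- Assemble
  rw [h1, ← Finset.sum_fiberwise Finset.univ (fun g => Quot.mk IsConj g) S,
    finsum_eq_sum_of_fintype]
  have hG : (Nat.card G : ℚ) ≠ 0 := by
    simp [Nat.card_eq_fintype_card, Fintype.card_ne_zero]
  rw [Finset.sum_div]
  apply Finset.sum_congr rfl
  intro q _
  have hfix : ∀ g ∈ Finset.univ.filter fun g => Quot.mk IsConj g = q, S g = S q.out := by
    intro g hg
    rw [Finset.mem_filter] at hg
    obtain ⟨c, hc⟩ := isConj_iff.mp ((h5 q g).mp hg.2)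
    rw [← hc, h3]
  rw [Finset.sum_congr rfl hfix, Finset.sum_const, nsmul_eq_mul]
  have hcard : (Finset.univ.filter fun g => Quot.mk IsConj g = q).card
      = Fintype.card {a : G // IsConj q.out a} := by
    rw [Fintype.card_subtype]
    congr 1
    ext g
    simp [h5]
  rw [hcard, h2]
  have hclass : ((Fintype.card {a : G // IsConj q.out a} : ℚ)) *
      (Nat.card ↥(Subgroup.centralizer {q.out}) : ℚ) = (Nat.card G : ℚ) := by
    rw [Nat.card_eq_fintype_card (α := G)]
    exact_mod_cast h4 q.out
  rw [div_eq_iff hG, ← hclass]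
  ring
end

section
/- Let G be a finite group acting on a finite set X and let k ≥ 1. Then χ^(k)(X,G) = Σ_{[g]} χ^(k−1)(X^⟨g⟩, C_G(g)), where the sum is over the conjugacy classes [g] of elements of G, C_G(g) is the centralizer of g, X^⟨g⟩ is the fixed point set of g regarded as a C_G(g)-set, and the right-hand side is independent of the chosen representatives g. In other words, the closed formula (1/|G|)·Σ_{pairwise commuting (g₀,…,g_k) ∈ G^{k+1}} |X^⟨g₀,…,g_k⟩| satisfies the recursion defining the higher order orbifold Euler characteristics. -/
open scoped BigOperators

section Helpers

open Subgroup

variable {G : Type*} [Group G] {X : Type*} [MulAction G X]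

lemma centralizer_smul_val {g : G} (h : ↥(Subgroup.centralizer ({g} : Set G)))
    (x : {x : X // g • x = x}) : (h • x).1 = (h : G) • x.1 := rfl

lemma cons_commute_iff {n : ℕ} (g₀ : G) (t : Fin n → G) :
    (∀ i j, Commute ((Fin.cons g₀ t : Fin (n+1) → G) i) ((Fin.cons g₀ t : Fin (n+1) → G) j)) ↔
      (∀ i, Commute g₀ (t i)) ∧ ∀ i j, Commute (t i) (t j) := by
  constructor
  · intro H
    exact ⟨fun i => by simpa using H 0 i.succ, fun i j => by simpa using H i.succ j.succ⟩
  · rintro ⟨h1, h2⟩ i j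
    induction i using Fin.cases with
    | zero =>
      induction j using Fin.cases with
      | zero => simp
      | succ j => simpa using h1 j
    | succ i =>
      induction j using Fin.cases with
      | zero => simpa using (h1 i).symm
      | succ j => simpa using h2 i j

def consFixEquiv {n : ℕ} (g₀ : G) (t : Fin n → ↥(Subgroup.centralizer ({g₀} : Set G))) :
    {x : X // ∀ i, (Fin.cons g₀ (fun i => (t i : G)) : Fin (n+1) → G) i • x = x} ≃
      {x : {x : X // g₀ • x = x} // ∀ i, t i • x = x} where
  toFun x := ⟨⟨x.1, by simpa using x.2 0⟩, fun i => Subtype.ext (by simpa [centralizer_smul_val] using x.2 i.succ)⟩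
  invFun y := ⟨y.1.1, fun i => by
    refine Fin.cases ?_ (fun i' => ?_) i
    · simpa using y.1.2
    · simpa [centralizer_smul_val] using congrArg Subtype.val (y.2 i')⟩
  left_inv x := rfl
  right_inv y := rfl

lemma conj_comm_conj {c a x : G} (h : x * a = a * x) :
    (c * x * c⁻¹) * (c * a * c⁻¹) = (c * a * c⁻¹) * (c * x * c⁻¹) := by
  calc (c * x * c⁻¹) * (c * a * c⁻¹) = c * (x * a) * c⁻¹ := by group
    _ = c * (a * x) * c⁻¹ := by rw [h]
    _ = (c * a * c⁻¹) * (c * x * c⁻¹) := by group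

def conjCentEquiv (c a : G) :
    ↥(Subgroup.centralizer ({a} : Set G)) ≃* ↥(Subgroup.centralizer ({c * a * c⁻¹} : Set G)) where
  toFun d := ⟨c * d.1 * c⁻¹, mem_centralizer_singleton_iff.mpr
    (conj_comm_conj (mem_centralizer_singleton_iff.mp d.2))⟩
  invFun d := ⟨c⁻¹ * d.1 * c, by
    rw [mem_centralizer_singleton_iff]
    have hd := mem_centralizer_singleton_iff.mp d.2
    have h2 := conj_comm_conj (c := c⁻¹) hd
    simpa [mul_assoc] using h2⟩
  left_inv d := Subtype.ext (by group)
  right_inv d := Subtype.ext (by group)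
  map_mul' d e := Subtype.ext (by push_cast; group)

def conjFixEquiv (c a : G) : {x : X // a • x = x} ≃ {x : X // (c * a * c⁻¹) • x = x} where
  toFun x := ⟨c • x.1, by rw [mul_smul, mul_smul, inv_smul_smul, x.2]⟩
  invFun y := ⟨c⁻¹ • y.1, by
    calc a • (c⁻¹ • y.1) = c⁻¹ • ((c * a * c⁻¹) • y.1) := by
          rw [mul_smul, mul_smul, inv_smul_smul]
      _ = c⁻¹ • y.1 := by rw [y.2]⟩
  left_inv x := Subtype.ext (inv_smul_smul c x.1)
  right_inv y := Subtype.ext (smul_inv_smul c y.1)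

lemma subgroup_commute_iff {H : Subgroup G} (u v : ↥H) :
    Commute u v ↔ Commute (u : G) (v : G) := by
  simp [Commute, SemiconjBy, Subtype.ext_iff]

end Helpers

lemma orbChi_congr_s7 {G G' : Type*} [Group G] [Group G'] [Fintype G] [Fintype G']
    {X X' : Type*} [MulAction G X] [MulAction G' X'] (e : G ≃* G') (f : X ≃ X')
    (hf : ∀ (g : G) (x : X), f (g • x) = e g • f x) (m : ℕ) :
    orbChi m G X = orbChi m G' X' := by
  classical
  unfold orbChi
  rw [Nat.card_congr e.toEquiv]
  congr 1
  rw [finsum_eq_sum_of_fintype, finsum_eq_sum_of_fintype]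
  refine Fintype.sum_equiv (Equiv.piCongrRight fun _ => e.toEquiv) _ _ fun g => ?_
  refine if_congr ?_ ?_ rfl
  · constructor
    · intro h i j
      simpa using (h i j).map e.toMonoidHom
    · intro h i j
      simpa using ((h i j).map e.symm.toMonoidHom)
  · congr 1
    refine Nat.card_congr (Equiv.subtypeEquiv f fun x => ?_)
    constructor
    · intro h i
      rw [Equiv.piCongrRight_apply, Pi.map_apply]
      show (e (g i) : G') • f x = f x
      rw [← hf, h i]
    · intro h i
      apply f.injective
      rw [hf]
      exact h i

lemma card_centralizer_conj {G : Type*} [Group G] {a b : G} (h : IsConj a b) :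
    Nat.card ↥(Subgroup.centralizer ({a} : Set G))
      = Nat.card ↥(Subgroup.centralizer ({b} : Set G)) := by
  obtain ⟨c, hc⟩ := isConj_iff.mp h
  subst hc
  exact Nat.card_congr (conjCentEquiv c a).toEquiv

lemma orbChi_fix_conj {G : Type*} [Group G] [Fintype G] {X : Type*} [MulAction G X]
    (m : ℕ) {a b : G} (h : IsConj a b) :
    orbChi m ↥(Subgroup.centralizer ({a} : Set G)) {x : X // a • x = x}
      = orbChi m ↥(Subgroup.centralizer ({b} : Set G)) {x : X // b • x = x} := by
  classical
  obtain ⟨c, hc⟩ := isConj_iff.mp h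
  subst hc
  refine orbChi_congr_s7 (conjCentEquiv c a) (conjFixEquiv c a) (fun d x => Subtype.ext ?_) m
  show c • ((d : G) • x.1) = ((c * (d : G) * c⁻¹) : G) • (c • x.1)
  rw [mul_smul, mul_smul, inv_smul_smul, ← mul_smul]


open scoped Classical in
lemma sum_cons_eq {G : Type*} [Group G] [Fintype G] {X : Type*} [Fintype X] [MulAction G X]
    (m : ℕ) (g₀ : G) :
    (∑ t : Fin (m + 1) → G,
        if ∀ i j, Commute ((Fin.cons g₀ t : Fin (m + 2) → G) i)
            ((Fin.cons g₀ t : Fin (m + 2) → G) j)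
        then (Nat.card {x : X // ∀ i, (Fin.cons g₀ t : Fin (m + 2) → G) i • x = x} : ℚ)
        else 0)
      = (Nat.card ↥(Subgroup.centralizer ({g₀} : Set G)) : ℚ)
          * orbChi m ↥(Subgroup.centralizer ({g₀} : Set G)) {x : X // g₀ • x = x} := by
  classical
  have hC : ((Nat.card ↥(Subgroup.centralizer ({g₀} : Set G)) : ℚ)) ≠ 0 := by
    exact_mod_cast Nat.card_pos.ne'
  rw [orbChi, finsum_eq_sum_of_fintype, mul_comm, div_mul_cancel₀ _ hC]
  rw [← Finset.sum_filter_of_ne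
    (p := fun t : Fin (m + 1) → G => ∀ i, t i ∈ Subgroup.centralizer ({g₀} : Set G))
    (by
      intro t _ hne i
      rw [Subgroup.mem_centralizer_singleton_iff]
      have hcomm : ∀ i j, Commute ((Fin.cons g₀ t : Fin (m + 2) → G) i)
          ((Fin.cons g₀ t : Fin (m + 2) → G) j) := by
        by_contra hc
        exact hne (if_neg hc)
      exact (((cons_commute_iff g₀ t).mp hcomm).1 i).symm.eq)]
  rw [Finset.sum_subtype (p := fun t : Fin (m + 1) → G => ∀ i, t i ∈ Subgroup.centralizer ({g₀} : Set G)) _ (fun t => by simp) _]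
  refine Fintype.sum_equiv (Equiv.subtypePiEquivPi) _ _ fun t => ?_
  refine if_congr ?_ ?_ rfl
  · rw [cons_commute_iff]
    constructor
    · rintro ⟨-, h2⟩ i j
      exact (subgroup_commute_iff _ _).mpr (h2 i j)
    · intro h
      refine ⟨fun i => ?_, fun i j => (subgroup_commute_iff _ _).mp (h i j)⟩
      have : Commute (t.1 i) g₀ := Subgroup.mem_centralizer_singleton_iff.mp (t.2 i)
      exact this.symm
  · congr 1
    exact Nat.card_congr (consFixEquiv g₀ (fun i => ⟨t.1 i, t.2 i⟩))

/-- **Recursion for the higher order orbifold Euler characteristics.** For a finite group `G`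
acting on a finite set `X` and `k ≥ 1`: `χ⁽ᵏ⁾(X,G) = Σ_{[g]} χ⁽ᵏ⁻¹⁾(X^⟨g⟩, C_G(g))`, where
the sum runs over the conjugacy classes of elements of `G` (formalized as the quotient of `G`
by the conjugation relation `IsConj`, with `Quot.out` picking a representative — the summand
does not depend on this choice), and the fixed point set `X^⟨g⟩` is a `C_G(g)`-set. -/
theorem orbChi_succ_eq_sum_over_conj_classes
    (G : Type*) [Group G] [Fintype G] (X : Type*) [Fintype X] [MulAction G X]
    (k : ℕ) (hk : 1 ≤ k) :
    orbChi k G X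
      = ∑ᶠ q : Quot (IsConj (α := G)),
          orbChi (k - 1) ↥(Subgroup.centralizer {q.out}) {x : X // q.out • x = x} := by
  classical
  obtain ⟨m, rfl⟩ : ∃ m, k = m + 1 := ⟨k - 1, (Nat.succ_pred_eq_of_pos hk).symm⟩
  simp only [Nat.add_sub_cancel]
  haveI : Finite (Quot (IsConj (α := G))) :=
    Finite.of_surjective _ (Quot.mk_surjective (r := IsConj (α := G)))
  haveI : Fintype (Quot (IsConj (α := G))) := Fintype.ofFinite _
  have hequiv : Equivalence (IsConj (α := G)) := ⟨IsConj.refl, fun h => h.symm, fun h h' => h.trans h'⟩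
  set φ : G → ℚ :=
    fun g => orbChi m ↥(Subgroup.centralizer ({g} : Set G)) {x : X // g • x = x} with hφ
  rw [orbChi, finsum_eq_sum_of_fintype, finsum_eq_sum_of_fintype]
  have hsum1 : (∑ g : Fin (m + 1 + 1) → G,
      if ∀ i j, Commute (g i) (g j) then (Nat.card {x : X // ∀ i, g i • x = x} : ℚ) else 0)
      = ∑ p : G × (Fin (m + 1) → G),
          if ∀ i j, Commute ((Fin.cons p.1 p.2 : Fin (m + 2) → G) i)
              ((Fin.cons p.1 p.2 : Fin (m + 2) → G) j)
          then (Nat.card {x : X // ∀ i, (Fin.cons p.1 p.2 : Fin (m + 2) → G) i • x = x} : ℚ)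
          else 0 :=
    (Fintype.sum_equiv (Fin.consEquiv (fun _ => G)) _ _ (fun p => rfl)).symm
  rw [hsum1, Fintype.sum_prod_type]
  have hsum2 : ∀ g₀ : G, (∑ t : Fin (m + 1) → G,
      if ∀ i j, Commute ((Fin.cons g₀ t : Fin (m + 2) → G) i)
          ((Fin.cons g₀ t : Fin (m + 2) → G) j)
      then (Nat.card {x : X // ∀ i, (Fin.cons g₀ t : Fin (m + 2) → G) i • x = x} : ℚ)
      else 0)
      = (Nat.card ↥(Subgroup.centralizer ({g₀} : Set G)) : ℚ) * φ g₀ :=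
    fun g₀ => sum_cons_eq m g₀
  rw [Finset.sum_congr rfl (fun g₀ _ => hsum2 g₀)]
  rw [← Finset.sum_fiberwise Finset.univ (Quot.mk (IsConj (α := G)))
    (fun g₀ => (Nat.card ↥(Subgroup.centralizer ({g₀} : Set G)) : ℚ) * φ g₀)]
  have hconj : ∀ (q : Quot (IsConj (α := G))) (g₀ : G),
      Quot.mk (IsConj (α := G)) g₀ = q → IsConj g₀ q.out := by
    intro q g₀ hg
    have h : Quot.mk (IsConj (α := G)) g₀ = Quot.mk (IsConj (α := G)) q.out := by
      rw [hg, Quot.out_eq]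
    exact hequiv.eqvGen_iff.mp (Quot.eq.mp h)
  have main : ∀ q : Quot (IsConj (α := G)),
      (∑ g₀ ∈ Finset.univ.filter (fun g => Quot.mk (IsConj (α := G)) g = q),
          (Nat.card ↥(Subgroup.centralizer ({g₀} : Set G)) : ℚ) * φ g₀)
        = (Nat.card G : ℚ) * φ q.out := by
    intro q
    have step1 : (∑ g₀ ∈ Finset.univ.filter (fun g => Quot.mk (IsConj (α := G)) g = q),
        (Nat.card ↥(Subgroup.centralizer ({g₀} : Set G)) : ℚ) * φ g₀)
        = (Finset.univ.filter (fun g => Quot.mk (IsConj (α := G)) g = q)).card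
            * ((Nat.card ↥(Subgroup.centralizer ({q.out} : Set G)) : ℚ) * φ q.out) := by
      rw [Finset.sum_congr rfl (fun g₀ hg => ?_), Finset.sum_const, nsmul_eq_mul]
      have h := hconj q g₀ (by simpa using hg)
      simp only [hφ]
      rw [card_centralizer_conj h, orbChi_fix_conj m h]
    rw [step1]
    haveI : Fintype (MulAction.orbit (ConjAct G) q.out) := Fintype.ofFinite _
    have e3 : ↥(Subgroup.centralizer ({q.out} : Set G))
        ≃ ↥(MulAction.stabilizer (ConjAct G) q.out) :=
      Equiv.subtypeEquiv ConjAct.toConjAct.toEquiv (fun x => by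
        rw [Subgroup.centralizer_eq_comap_stabilizer]
        exact Iff.rfl)
    have e4 : {g : G // Quot.mk (IsConj (α := G)) g = q}
        ≃ ↥(MulAction.orbit (ConjAct G) q.out) :=
      Equiv.subtypeEquivRight (fun g => by
        constructor
        · intro h
          exact ConjAct.mem_orbit_conjAct.mpr (hconj q g h)
        · intro h
          rw [← Quot.out_eq q]
          exact Quot.sound (ConjAct.mem_orbit_conjAct.mp h))
    have hcard : ((Finset.univ.filter (fun g => Quot.mk (IsConj (α := G)) g = q)).card)
        * Nat.card ↥(Subgroup.centralizer ({q.out} : Set G)) = Nat.card G := by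
      have h1 : (Finset.univ.filter (fun g => Quot.mk (IsConj (α := G)) g = q)).card
          = Fintype.card ↥(MulAction.orbit (ConjAct G) q.out) := by
        rw [← Fintype.card_subtype]
        exact Fintype.card_congr e4
      have h2 := MulAction.card_orbit_mul_card_stabilizer_eq_card_group (ConjAct G) q.out
      have h3 : Nat.card ↥(Subgroup.centralizer ({q.out} : Set G))
          = Fintype.card ↥(MulAction.stabilizer (ConjAct G) q.out) := by
        rw [Nat.card_congr e3, Nat.card_eq_fintype_card]
      have h4 : Fintype.card (ConjAct G) = Nat.card G := by
        rw [Fintype.card_congr ConjAct.ofConjAct.toEquiv, Nat.card_eq_fintype_card]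
      rw [h1, h3, ← h4]
      exact h2
    calc ((Finset.univ.filter (fun g => Quot.mk (IsConj (α := G)) g = q)).card : ℚ)
          * ((Nat.card ↥(Subgroup.centralizer ({q.out} : Set G)) : ℚ) * φ q.out)
        = (((Finset.univ.filter (fun g => Quot.mk (IsConj (α := G)) g = q)).card
            * Nat.card ↥(Subgroup.centralizer ({q.out} : Set G)) : ℕ) : ℚ) * φ q.out := by
          push_cast; ring
      _ = (Nat.card G : ℚ) * φ q.out := by rw [hcard]
  rw [Finset.sum_congr rfl (fun q _ => main q), ← Finset.mul_sum]
  have hG : ((Nat.card G : ℚ)) ≠ 0 := by exact_mod_cast Nat.card_pos.ne'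
  rw [mul_comm, mul_div_assoc, div_self hG, mul_one]
end

section
/- Let G be a finite group acting on a finite set X and let k ≥ 0. Then the orbifold Euler characteristic of order k is a nonnegative integer; that is, |G| divides Σ_{(g₀,…,g_k) ∈ G^{k+1} pairwise commuting} |X^⟨g₀,…,g_k⟩|. -/
open scoped BigOperators

namespace OrbChiAux

open scoped Classical
open MulAction

variable (G : Type*) [Group G] (X : Type*) [MulAction G X] (k : ℕ)

/-- Pairs (tuple, point) with pairwise commuting tuple fixing the point. -/
def CommFix : Type _ :=
  {p : (Fin k → G) × X // (∀ i j, Commute (p.1 i) (p.1 j)) ∧ ∀ i, p.1 i • p.2 = p.2}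

variable {G X k}

instance : SMul G (CommFix G X k) :=
  ⟨fun g p => ⟨(fun i => g * p.1.1 i * g⁻¹, g • p.1.2),
    fun i j => by simpa [MulAut.conj_apply] using (p.2.1 i j).map (MulAut.conj g),
    fun i => by
      show (g * p.1.1 i * g⁻¹) • g • p.1.2 = g • p.1.2
      rw [mul_smul, inv_smul_smul, mul_smul, p.2.2 i]⟩⟩

@[simp] lemma smul_commFix_val (g : G) (p : CommFix G X k) :
    (g • p).1 = (fun i => g * p.1.1 i * g⁻¹, g • p.1.2) := rfl

instance : MulAction G (CommFix G X k) where
  one_smul p := Subtype.ext <| by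
    show (fun i => (1 : G) * p.1.1 i * 1⁻¹, (1 : G) • p.1.2) = p.1
    simp
  mul_smul a b p := Subtype.ext <| by
    show (fun i => (a * b) * p.1.1 i * (a * b)⁻¹, (a * b) • p.1.2)
        = (fun i => a * (b * p.1.1 i * b⁻¹) * a⁻¹, a • b • p.1.2)
    rw [mul_smul]
    congr 1
    funext i
    group

lemma smul_commFix_eq_iff (g₀ : G) (p : CommFix G X k) :
    g₀ • p = p ↔ (∀ i, Commute g₀ (p.1.1 i)) ∧ g₀ • p.1.2 = p.1.2 := by
  rw [show g₀ • p = p ↔ (g₀ • p).1 = p.1 from Subtype.ext_iff, Prod.ext_iff]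
  simp only [smul_commFix_val, funext_iff]
  constructor
  · rintro ⟨h1, h2⟩
    exact ⟨fun i => mul_inv_eq_iff_eq_mul.mp (h1 i), h2⟩
  · rintro ⟨h1, h2⟩
    exact ⟨fun i => mul_inv_eq_iff_eq_mul.mpr (h1 i), h2⟩

lemma cons_comm_iff (g₀ : G) (f : Fin k → G) :
    (∀ i j, Commute ((Fin.cons g₀ f : Fin (k + 1) → G) i) ((Fin.cons g₀ f : Fin (k + 1) → G) j)) ↔
      (∀ i j, Commute (f i) (f j)) ∧ ∀ i, Commute g₀ (f i) := by
  constructor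
  · intro h
    exact ⟨fun i j => by simpa using h i.succ j.succ, fun i => by simpa using h 0 i.succ⟩
  · rintro ⟨h1, h2⟩ i j
    rcases Fin.eq_zero_or_eq_succ i with rfl | ⟨i, rfl⟩ <;>
      rcases Fin.eq_zero_or_eq_succ j with rfl | ⟨j, rfl⟩
    · simp
    · simpa using h2 j
    · simpa using (h2 i).symm
    · simpa using h1 i j

lemma cons_fix_iff (g₀ : G) (f : Fin k → G) (x : X) :
    (∀ i, (Fin.cons g₀ f : Fin (k + 1) → G) i • x = x) ↔ g₀ • x = x ∧ ∀ i, f i • x = x := by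
  constructor
  · intro h
    exact ⟨by simpa using h 0, fun i => by simpa using h i.succ⟩
  · rintro ⟨h0, h1⟩ i
    rcases Fin.eq_zero_or_eq_succ i with rfl | ⟨i, rfl⟩
    · simpa using h0
    · simpa using h1 i

/-- The fixed points of `g₀` on `CommFix` are exactly the commuting `(k+1)`-tuples
starting with `g₀` together with a common fixed point. -/
noncomputable def fixedByEquiv (g₀ : G) :
    MulAction.fixedBy (CommFix G X k) g₀ ≃
      Σ f : Fin k → G,
        {x : X // (∀ i j, Commute ((Fin.cons g₀ f : Fin (k + 1) → G) i) ((Fin.cons g₀ f : Fin (k + 1) → G) j)) ∧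
            ∀ i, (Fin.cons g₀ f : Fin (k + 1) → G) i • x = x} where
  toFun y :=
    ⟨y.1.1.1, y.1.1.2, by
      have hy := (smul_commFix_eq_iff g₀ y.1).mp y.2
      exact ⟨(cons_comm_iff g₀ _).mpr ⟨y.1.2.1, hy.1⟩,
        (cons_fix_iff g₀ _ _).mpr ⟨hy.2, y.1.2.2⟩⟩⟩
  invFun s :=
    ⟨⟨(s.1, s.2.1),
      ((cons_comm_iff g₀ s.1).mp s.2.2.1).1,
      ((cons_fix_iff g₀ s.1 s.2.1).mp s.2.2.2).2⟩, by
      refine (smul_commFix_eq_iff g₀ _).mpr ?_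
      exact ⟨((cons_comm_iff g₀ s.1).mp s.2.2.1).2,
        ((cons_fix_iff g₀ s.1 s.2.1).mp s.2.2.2).1⟩⟩
  left_inv y := rfl
  right_inv s := rfl

lemma card_ite {C : Prop} [Decidable C] {F : X → Prop} :
    (if C then Nat.card {x : X // F x} else 0) = Nat.card {x : X // C ∧ F x} := by
  by_cases h : C
  · rw [if_pos h]
    exact (Nat.card_congr (Equiv.subtypeEquivRight fun x => and_iff_right h)).symm
  · rw [if_neg h]
    have : IsEmpty {x : X // C ∧ F x} := ⟨fun x => h x.2.1⟩
    simp

variable [Fintype G] [Fintype X]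

noncomputable instance : Fintype (CommFix G X k) := by
  unfold CommFix; infer_instance

lemma card_fixedBy (g₀ : G) :
    Nat.card (MulAction.fixedBy (CommFix G X k) g₀) =
      ∑ f : Fin k → G,
        if ∀ i j, Commute ((Fin.cons g₀ f : Fin (k + 1) → G) i) ((Fin.cons g₀ f : Fin (k + 1) → G) j) then
          Nat.card {x : X // ∀ i, (Fin.cons g₀ f : Fin (k + 1) → G) i • x = x}
        else 0 := by
  rw [Nat.card_congr (fixedByEquiv g₀)]
  have : ∀ f : Fin k → G,
      (if ∀ i j, Commute ((Fin.cons g₀ f : Fin (k + 1) → G) i) ((Fin.cons g₀ f : Fin (k + 1) → G) j) then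
          Nat.card {x : X // ∀ i, (Fin.cons g₀ f : Fin (k + 1) → G) i • x = x}
        else 0)
      = Nat.card {x : X // (∀ i j, Commute ((Fin.cons g₀ f : Fin (k + 1) → G) i) ((Fin.cons g₀ f : Fin (k + 1) → G) j)) ∧
            ∀ i, (Fin.cons g₀ f : Fin (k + 1) → G) i • x = x} := fun f => card_ite
  rw [Finset.sum_congr rfl fun f _ => this f]
  simp only [Nat.card_eq_fintype_card]
  rw [Fintype.card_sigma]

lemma main_sum :
    (∑ g : Fin (k + 1) → G,
        if ∀ i j, Commute (g i) (g j) then Nat.card {x : X // ∀ i, g i • x = x} else 0)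
      = Nat.card (Quotient (MulAction.orbitRel G (CommFix G X k))) * Nat.card G := by
  rw [← Equiv.sum_comp (Fin.consEquiv fun _ : Fin (k + 1) => G)
    (fun g : Fin (k + 1) → G =>
      if ∀ i j, Commute (g i) (g j) then Nat.card {x : X // ∀ i, g i • x = x} else 0),
    Fintype.sum_prod_type]
  have h : ∀ g₀ : G, ∀ f : Fin k → G,
      (Fin.consEquiv fun _ : Fin (k + 1) => G) (g₀, f) = Fin.cons g₀ f := fun _ _ => rfl
  calc (∑ g₀ : G, ∑ f : Fin k → G,
        if ∀ i j, Commute ((Fin.consEquiv fun _ : Fin (k + 1) => G) (g₀, f) i)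
            ((Fin.consEquiv fun _ : Fin (k + 1) => G) (g₀, f) j) then
          Nat.card {x : X // ∀ i, (Fin.consEquiv fun _ : Fin (k + 1) => G) (g₀, f) i • x = x}
        else 0)
      = ∑ g₀ : G, Nat.card (MulAction.fixedBy (CommFix G X k) g₀) := by
        refine Finset.sum_congr rfl fun g₀ _ => ?_
        rw [card_fixedBy g₀]
        refine Finset.sum_congr rfl fun f _ => ?_
        rw [h g₀ f]
    _ = Nat.card (Quotient (MulAction.orbitRel G (CommFix G X k))) * Nat.card G := by
        haveI : ∀ a : G, Fintype (MulAction.fixedBy (CommFix G X k) a) :=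
          fun a => Fintype.ofFinite _
        simp only [Nat.card_eq_fintype_card]
        exact MulAction.sum_card_fixedBy_eq_card_orbits_mul_card_group G (CommFix G X k)

end OrbChiAux

open scoped Classical in
/-- **Integrality of the higher order orbifold Euler characteristic.** For a finite group `G`
acting on a finite set `X` and `k ≥ 0`, the orbifold Euler characteristic of order `k` is a
nonnegative integer; that is, `|G|` divides
`Σ_{pairwise commuting (g₀,…,g_k) ∈ G^{k+1}} |X^⟨g₀,…,g_k⟩|`. -/
theorem orbChi_integral
    (G : Type*) [Group G] [Fintype G] (X : Type*) [Fintype X] [MulAction G X] (k : ℕ) :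
    (Nat.card G ∣
        ∑ᶠ g : Fin (k + 1) → G,
          if ∀ i j, Commute (g i) (g j) then Nat.card {x : X // ∀ i, g i • x = x} else 0)
      ∧ ∃ m : ℕ, orbChi k G X = m := by
  set N := Nat.card (Quotient (MulAction.orbitRel G (OrbChiAux.CommFix G X k))) with hN
  have hsum : (∑ᶠ g : Fin (k + 1) → G,
      if ∀ i j, Commute (g i) (g j) then Nat.card {x : X // ∀ i, g i • x = x} else 0)
      = N * Nat.card G := by
    rw [finsum_eq_sum_of_fintype]
    exact OrbChiAux.main_sum
  constructor
  · exact ⟨N, by rw [hsum, Nat.mul_comm]⟩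
  · refine ⟨N, ?_⟩
    have hcast : (∑ᶠ g : Fin (k + 1) → G,
        if ∀ i j, Commute (g i) (g j) then (Nat.card {x : X // ∀ i, g i • x = x} : ℚ) else 0)
        = ((∑ᶠ g : Fin (k + 1) → G,
            if ∀ i j, Commute (g i) (g j) then Nat.card {x : X // ∀ i, g i • x = x} else 0 : ℕ)
          : ℚ) := by
      rw [finsum_eq_sum_of_fintype, finsum_eq_sum_of_fintype, Nat.cast_sum]
      exact Finset.sum_congr rfl fun g _ => by split <;> simp
    have hG : (Nat.card G : ℚ) ≠ 0 := by
      exact_mod_cast Nat.card_pos.ne'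
    rw [orbChi, hcast, hsum]
    push_cast
    rw [mul_div_assoc, div_self hG, mul_one]
end
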